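/- Assume Conditions 1 and 2, let W and W' be identically distributed square-integrable random variables with values in an interval J with (a,b) ⊆ J ⊆ closure of (a,b) on which γ and η are defined, with E|γ(W)| < ∞, and suppose that for some constant λ > 0 and remainder terms R and S one has (1/λ)·E[W' − W | W] = γ(W) + R and (1/(2λ))·E[(W' − W)² | W] = η(W) + S. Then for every bounded, continuously differentiable function f : J → ℝ which is Lipschitz-continuous with Lipschitz-continuous derivative f', one has |E[η(W)f'(W) + γ(W)f(W)]| ≤ (‖f''‖/(6λ))·E[|W' − W|³] + ‖f‖·E|R| + ‖f'‖·E|S|, where ‖f''‖ denotes the minimum Lipschitz constant of f'. -/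

import Mathlib

open MeasureTheory Set Filter Topology

noncomputable section

/-- The open interval `(a,b)` with extended-real endpoints, viewed as a set of reals. -/
def ooE (a b : EReal) : Set ℝ := {x : ℝ | a < (x : EReal) ∧ (x : EReal) < b}

/-- The closed interval `[a,b] ∩ ℝ` (the closure of `(a,b)` in `ℝ`). -/
def ccE (a b : EReal) : Set ℝ := {x : ℝ | a ≤ (x : EReal) ∧ (x : EReal) ≤ b}

/-- The filter on `ℝ` of right-neighbourhoods of the (possibly infinite) endpoint `a`:
for finite `a` this is `𝓝[>] a`, for `a = ⊥` it is `atBot`. -/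
def nhdsGT (a : EReal) : Filter ℝ :=
  Filter.comap (fun x : ℝ => (x : EReal)) (nhdsWithin a (Set.Ioi a))

/-- The filter on `ℝ` of left-neighbourhoods of the (possibly infinite) endpoint `b`. -/
def nhdsLT (b : EReal) : Filter ℝ :=
  Filter.comap (fun x : ℝ => (x : EReal)) (nhdsWithin b (Set.Iio b))

/-- `f` is (locally) an indefinite integral of `f'` on `s`. -/
def IsLocACOn (f f' : ℝ → ℝ) (s : Set ℝ) : Prop :=
  ∀ x ∈ s, ∀ y ∈ s, IntervalIntegrable f' volume x y ∧ f y - f x = ∫ t in x..y, f' t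

/-- `f` is locally absolutely continuous on `s`. -/
def LocACOn (f : ℝ → ℝ) (s : Set ℝ) : Prop := ∃ f', IsLocACOn f f' s

/-- Condition 1: `p` is a probability density which is positive and locally absolutely
continuous on `(a,b)` and vanishes outside of `(a,b)`. -/
structure Cond1 (a b : EReal) (p : ℝ → ℝ) : Prop where
  lt : a < b
  meas : Measurable p
  nonneg : ∀ x, 0 ≤ p x
  pos : ∀ x ∈ ooE a b, 0 < p x
  zero : ∀ x, x ∉ ooE a b → p x = 0
  integrable : MeasureTheory.Integrable p
  total : ∫ x, p x = 1
  locAC : LocACOn p (ooE a b)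

/-- Condition 2: `γ` is Borel measurable, not identically zero, decreasing on `[a,b]`,
with `E|γ(Z)| < ∞` and `E[γ(Z)] = 0`. -/
structure Cond2 (a b : EReal) (p γ : ℝ → ℝ) : Prop where
  meas : Measurable γ
  ne_zero : ∃ x ∈ ccE a b, γ x ≠ 0
  anti : AntitoneOn γ (ccE a b)
  integrable : MeasureTheory.Integrable (fun x => γ x * p x)
  mean_zero : ∫ x, γ x * p x = 0

/-- `I(x) = ∫_a^x γ(t) p(t) dt` (the density vanishes outside `(a,b)`). -/
def Ifun (γ p : ℝ → ℝ) (x : ℝ) : ℝ := ∫ t in Iic x, γ t * p t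

/-- The distribution function `F` of the density `p`. -/
def Ffun (p : ℝ → ℝ) (x : ℝ) : ℝ := ∫ t in Iic x, p t

/-- `η = I/p`. -/
def etaFun (γ p : ℝ → ℝ) (x : ℝ) : ℝ := Ifun γ p x / p x

/-- `x₀ = sup {x ∈ (a,b) : γ(x) > 0}`. -/
def xZero (a b : EReal) (γ : ℝ → ℝ) : ℝ := sSup {x | x ∈ ooE a b ∧ 0 < γ x}

/-- `E[h(Z)]` for `Z` with density `p`. -/
def meanOf (p h : ℝ → ℝ) : ℝ := ∫ x, h x * p x

/-- The standard solution `g_h` of the Stein equation `η g' + γ g = h - E[h(Z)]`. -/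
def gsol (γ p h : ℝ → ℝ) (x : ℝ) : ℝ :=
  (∫ t in Iic x, (h t - meanOf p h) * p t) / (p x * etaFun γ p x)

/-- The derivative of the standard solution, defined everywhere via the Stein equation. -/
def gsol' (γ p h : ℝ → ℝ) (x : ℝ) : ℝ :=
  (h x - meanOf p h - γ x * gsol γ p h x) / etaFun γ p x

lemma interval_subset_of_between {a b : EReal} {J : Set ℝ}
    (hJ1 : ooE a b ⊆ J) (hJ2 : J ⊆ ccE a b) {x y : ℝ} (hx : x ∈ J) (hy : y ∈ J) :
    Set.uIcc x y ⊆ J := by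
  intro t ht
  rcases eq_or_ne t x with rfl | htx
  · exact hx
  rcases eq_or_ne t y with rfl | hty
  · exact hy
  rw [Set.mem_uIcc] at ht
  have key : ∀ u v : ℝ, u ∈ J → v ∈ J → u < t → t < v → t ∈ J := by
    intro u v hu hv h1 h2
    refine hJ1 ⟨lt_of_le_of_lt (hJ2 hu).1 ?_, lt_of_lt_of_le ?_ (hJ2 hv).2⟩
    · exact_mod_cast h1
    · exact_mod_cast h2
  rcases ht with ⟨h1, h2⟩ | ⟨h1, h2⟩
  · exact key x y hx hy (lt_of_le_of_ne h1 (Ne.symm htx)) (lt_of_le_of_ne h2 hty)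
  · exact key y x hy hx (lt_of_le_of_ne h1 (Ne.symm hty)) (lt_of_le_of_ne h2 htx)

lemma abs_integral_abs_sub (x y : ℝ) :
    |(∫ t in x..y, |t - x|)| = (y - x) ^ 2 / 2 := by
  have h : (∫ t in x..y, |t - x|) = ∫ t in (0:ℝ)..(y - x), |t| := by
    simpa using intervalIntegral.integral_comp_sub_right (a := x) (b := y) (fun t => |t|) x
  rw [h]
  rcases le_or_gt 0 (y - x) with hu | hu
  · rw [intervalIntegral.integral_congr (g := fun t : ℝ => t) ?_, integral_id]
    · rw [show ((y - x) ^ 2 - 0 ^ 2) / 2 = (y - x) ^ 2 / 2 by ring, abs_of_nonneg (by positivity)]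
    · intro t ht
      rw [Set.uIcc_of_le hu] at ht
      exact abs_of_nonneg ht.1
  · rw [intervalIntegral.integral_congr (g := fun t : ℝ => -t) ?_]
    · rw [intervalIntegral.integral_neg, integral_id, abs_neg,
        show ((y - x) ^ 2 - 0 ^ 2) / 2 = (y - x) ^ 2 / 2 by ring, abs_of_nonneg (by positivity)]
    · intro t ht
      rw [Set.uIcc_of_ge hu.le] at ht
      exact abs_of_nonpos ht.2

lemma abs_integral_sq_sub (x y : ℝ) :
    |(∫ t in x..y, (t - x) ^ 2)| = |y - x| ^ 3 / 3 := by
  have h := intervalIntegral.integral_comp_sub_right (a := x) (b := y) (fun t => t ^ 2) x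
  rw [sub_self] at h
  rw [h, integral_pow]
  norm_num
  rw [abs_div, ← pow_abs]
  norm_num

lemma taylor1 {J : Set ℝ} (hJc : ∀ ⦃x⦄, x ∈ J → ∀ ⦃y⦄, y ∈ J → Set.uIcc x y ⊆ J)
    {f f' : ℝ → ℝ} (hf : ∀ x ∈ J, HasDerivWithinAt f (f' x) J x)
    (hf'cont : ContinuousOn f' J) {Mf'' : NNReal} (hf'' : LipschitzOnWith Mf'' f' J)
    {x y : ℝ} (hx : x ∈ J) (hy : y ∈ J) :
    |f y - f x - f' x * (y - x)| ≤ (Mf'' : ℝ) * ((y - x) ^ 2 / 2) := by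
  have hu : Set.uIcc x y ⊆ J := hJc hx hy
  have hint : IntervalIntegrable f' volume x y := (hf'cont.mono hu).intervalIntegrable
  have hIoo : Set.Ioo (min x y) (max x y) ⊆ Set.uIcc x y := by
    rw [Set.uIcc]
    exact Set.Ioo_subset_Icc_self
  have hFTC : ∫ t in x..y, f' t = f y - f x := by
    refine intervalIntegral.integral_eq_sub_of_hasDeriv_right
      (fun t ht => ((hf t (hu ht)).continuousWithinAt).mono hu) (fun t ht => ?_) hint
    have htJ : J ∈ 𝓝 t :=
      mem_nhds_iff.mpr ⟨Set.Ioo (min x y) (max x y), fun s hs => hu (hIoo hs), isOpen_Ioo, ht⟩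
    exact (hf t (hu (hIoo ht))).mono_of_mem_nhdsWithin (mem_nhdsWithin_of_mem_nhds htJ)
  have hrepr : f y - f x - f' x * (y - x) = ∫ t in x..y, (f' t - f' x) := by
    rw [intervalIntegral.integral_sub hint intervalIntegrable_const, hFTC,
      intervalIntegral.integral_const, smul_eq_mul]
    ring
  rw [hrepr, ← Real.norm_eq_abs]
  have hb : ‖∫ t in x..y, (f' t - f' x)‖ ≤ |(∫ t in x..y, (Mf'' : ℝ) * |t - x|)| := by
    refine intervalIntegral.norm_integral_le_abs_of_norm_le ?_
      (Continuous.intervalIntegrable (by continuity : Continuous fun t : ℝ => (Mf'' : ℝ) * |t - x|) x y)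
    refine (ae_restrict_iff' measurableSet_uIoc).mpr (Filter.Eventually.of_forall fun t ht => ?_)
    have htJ : t ∈ J := hu (Set.uIoc_subset_uIcc ht)
    have := hf''.dist_le_mul t htJ x hx
    rw [Real.dist_eq, Real.dist_eq] at this
    simpa [Real.norm_eq_abs] using this
  refine hb.trans ?_
  rw [intervalIntegral.integral_const_mul, abs_mul, abs_of_nonneg Mf''.coe_nonneg,
    abs_integral_abs_sub]

lemma taylor2 {J : Set ℝ} (hJc : ∀ ⦃x⦄, x ∈ J → ∀ ⦃y⦄, y ∈ J → Set.uIcc x y ⊆ J)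
    {f f' : ℝ → ℝ} (hf : ∀ x ∈ J, HasDerivWithinAt f (f' x) J x)
    (hf'cont : ContinuousOn f' J) {Mf'' : NNReal} (hf'' : LipschitzOnWith Mf'' f' J)
    {F : ℝ → ℝ} (hF : ∀ x ∈ J, ∀ y ∈ J, F y - F x = ∫ t in x..y, f t)
    {x y : ℝ} (hx : x ∈ J) (hy : y ∈ J) :
    |F y - F x - f x * (y - x) - f' x * (y - x) ^ 2 / 2| ≤ (Mf'' : ℝ) / 6 * |y - x| ^ 3 := by
  have hu : Set.uIcc x y ⊆ J := hJc hx hy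
  have hfc : ContinuousOn f J := fun t ht => (hf t ht).continuousWithinAt
  have hfint : IntervalIntegrable f volume x y := (hfc.mono hu).intervalIntegrable
  have haff : Continuous (fun t : ℝ => f x + f' x * (t - x)) := by continuity
  have h2 : (∫ t in x..y, (t - x)) = (y - x) ^ 2 / 2 := by
    have h := intervalIntegral.integral_comp_sub_right (a := x) (b := y) (fun t => t) x
    rw [sub_self] at h
    rw [h, integral_id]
    ring
  have h1 : ∫ t in x..y, (f x + f' x * (t - x)) = f x * (y - x) + f' x * (y - x) ^ 2 / 2 := by
    rw [intervalIntegral.integral_add intervalIntegrable_const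
      (Continuous.intervalIntegrable (by continuity : Continuous fun t : ℝ => f' x * (t - x)) x y),
      intervalIntegral.integral_const, intervalIntegral.integral_const_mul, h2, smul_eq_mul]
    ring
  have hrepr : F y - F x - f x * (y - x) - f' x * (y - x) ^ 2 / 2
      = ∫ t in x..y, (f t - (f x + f' x * (t - x))) := by
    rw [intervalIntegral.integral_sub hfint (haff.intervalIntegrable x y), h1, hF x hx y hy]
    ring
  rw [hrepr, ← Real.norm_eq_abs]
  have hb : ‖∫ t in x..y, (f t - (f x + f' x * (t - x)))‖
      ≤ |∫ t in x..y, (Mf'' : ℝ) / 2 * (t - x) ^ 2| := by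
    refine intervalIntegral.norm_integral_le_abs_of_norm_le ?_
      (Continuous.intervalIntegrable (by continuity : Continuous fun t : ℝ => (Mf'' : ℝ) / 2 * (t - x) ^ 2) x y)
    refine (ae_restrict_iff' measurableSet_uIoc).mpr (Filter.Eventually.of_forall fun t ht => ?_)
    have htJ : t ∈ J := hu (Set.uIoc_subset_uIcc ht)
    have := taylor1 hJc hf hf'cont hf'' hx htJ
    rw [Real.norm_eq_abs]
    calc |f t - (f x + f' x * (t - x))| = |f t - f x - f' x * (t - x)| := by ring_nf
      _ ≤ (Mf'' : ℝ) * ((t - x) ^ 2 / 2) := taylor1 hJc hf hf'cont hf'' hx htJ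
      _ = (Mf'' : ℝ) / 2 * (t - x) ^ 2 := by ring
  refine hb.trans ?_
  rw [intervalIntegral.integral_const_mul, abs_mul, abs_of_nonneg (by positivity : (0:ℝ) ≤ (Mf'' : ℝ) / 2),
    abs_integral_sq_sub]
  exact le_of_eq (by ring)

/-- Abstract exchangeable-pairs plug-in result: if `(W,W')` are identically distributed,
square-integrable, with values in `J`, `(a,b) ⊆ J ⊆ [a,b]`, and satisfy the two regression
properties with remainders `R` and `S`, then for every bounded, continuously differentiable,
Lipschitz `f` with Lipschitz derivative `f'`,
`|E[η(W)f'(W) + γ(W)f(W)]| ≤ ‖f''‖/(6λ) E|W'-W|³ + ‖f‖ E|R| + ‖f'‖ E|S|`. -/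
theorem prop_plugin
    {Ω : Type*} [MeasurableSpace Ω] (μ : Measure Ω) [IsProbabilityMeasure μ]
    (a b : EReal) (p γ : ℝ → ℝ) (h1 : Cond1 a b p) (h2 : Cond2 a b p γ)
    (J : Set ℝ) (hJ1 : ooE a b ⊆ J) (hJ2 : J ⊆ ccE a b)
    (W W' : Ω → ℝ) (hWm : Measurable W) (hW'm : Measurable W')
    (hid : μ.map W = μ.map W')
    (hW2 : MeasureTheory.MemLp W 2 μ)
    (hWval : ∀ ω, W ω ∈ J) (hW'val : ∀ ω, W' ω ∈ J)
    (hγW : MeasureTheory.Integrable (fun ω => γ (W ω)) μ)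
    (lam : ℝ) (hlam : 0 < lam)
    (R S : Ω → ℝ)
    (hR : MeasureTheory.Integrable R μ) (hS : MeasureTheory.Integrable S μ)
    (hreg1 : μ[(fun ω => W' ω - W ω) | MeasurableSpace.comap W inferInstance] =ᵐ[μ]
      fun ω => lam * (γ (W ω) + R ω))
    (hreg2 : μ[(fun ω => (W' ω - W ω) ^ 2) | MeasurableSpace.comap W inferInstance] =ᵐ[μ]
      fun ω => 2 * lam * (etaFun γ p (W ω) + S ω))
    (f f' : ℝ → ℝ)
    (hf : ∀ x ∈ J, HasDerivWithinAt f (f' x) J x)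
    (hf'cont : ContinuousOn f' J)
    (Mf Mf' : ℝ) (Mf'' : NNReal)
    (hMf : ∀ x ∈ J, |f x| ≤ Mf)
    (hMf' : ∀ x ∈ J, |f' x| ≤ Mf')
    (hf'' : LipschitzOnWith Mf'' f' J) :
    ENNReal.ofReal |∫ ω, (etaFun γ p (W ω) * f' (W ω) + γ (W ω) * f (W ω)) ∂μ| ≤
      ENNReal.ofReal ((Mf'' : ℝ) / (6 * lam)) *
          ∫⁻ ω, ENNReal.ofReal (|W' ω - W ω| ^ 3) ∂μ +
        ENNReal.ofReal (Mf * ∫ ω, |R ω| ∂μ) +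
        ENNReal.ofReal (Mf' * ∫ ω, |S ω| ∂μ) := by
  classical
  have hm : MeasurableSpace.comap W inferInstance ≤ ‹MeasurableSpace Ω› :=
    measurable_iff_comap_le.mp hWm
  haveI : SigmaFinite (μ.trim hm) := by
    haveI : IsFiniteMeasure (μ.trim hm) := isFiniteMeasure_trim hm
    infer_instance
  obtain ⟨ω₀, -⟩ : (Set.univ : Set Ω).Nonempty :=
    nonempty_of_measure_ne_zero (by simp : μ Set.univ ≠ 0)
  set c := W ω₀ with hcdef
  have hc : c ∈ J := hWval ω₀
  have hMf0 : 0 ≤ Mf := (abs_nonneg _).trans (hMf c hc)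
  have hMf'0 : 0 ≤ Mf' := (abs_nonneg _).trans (hMf' c hc)
  have hJc : ∀ ⦃x⦄, x ∈ J → ∀ ⦃y⦄, y ∈ J → Set.uIcc x y ⊆ J :=
    fun x hx y hy => interval_subset_of_between hJ1 hJ2 hx hy
  -- J is measurable
  have hooE : IsOpen (ooE a b) := by
    have h : ooE a b = ((↑) : ℝ → EReal) ⁻¹' (Set.Ioo a b) := rfl
    rw [h]
    exact isOpen_Ioo.preimage continuous_coe_real_ereal
  have hJmeas : MeasurableSet J := by
    have hsub : J \ ooE a b ⊆ {x : ℝ | (x : EReal) = a} ∪ {x : ℝ | (x : EReal) = b} := by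
      intro x hx
      rcases hx with ⟨hxJ, hxo⟩
      by_cases hA : a < (x : EReal)
      · right
        have hnb : ¬ ((x : EReal) < b) := fun hh => hxo ⟨hA, hh⟩
        exact le_antisymm (hJ2 hxJ).2 (not_lt.mp hnb)
      · left
        exact (le_antisymm (hJ2 hxJ).1 (not_lt.mp hA)).symm
    have hcnt : (J \ ooE a b).Countable := by
      refine Set.Countable.mono hsub (Set.Countable.union ?_ ?_) <;>
      · refine Set.Subsingleton.countable ?_
        intro u hu v hv
        exact EReal.coe_injective (hu.trans hv.symm)
    have hJeq : J = ooE a b ∪ (J \ ooE a b) := (Set.union_diff_cancel hJ1).symm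
    rw [hJeq]
    exact hooE.measurableSet.union hcnt.measurableSet
  -- measurable global versions of f and f'
  have hfc : ContinuousOn f J := fun x hx => (hf x hx).continuousWithinAt
  obtain ⟨φ, hφm, hφeq⟩ := (MeasurableEmbedding.subtype_coe hJmeas).exists_measurable_extend
    (continuousOn_iff_continuous_restrict.mp hfc).measurable (fun _ => ⟨0⟩)
  obtain ⟨φ', hφ'm, hφ'eq⟩ := (MeasurableEmbedding.subtype_coe hJmeas).exists_measurable_extend
    (continuousOn_iff_continuous_restrict.mp hf'cont).measurable (fun _ => ⟨0⟩)
  have hφJ : ∀ x ∈ J, φ x = f x := fun x hx => congrFun hφeq ⟨x, hx⟩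
  have hφ'J : ∀ x ∈ J, φ' x = f' x := fun x hx => congrFun hφ'eq ⟨x, hx⟩
  have hφWb : ∀ ω, |φ (W ω)| ≤ Mf := fun ω => by
    rw [hφJ _ (hWval ω)]; exact hMf _ (hWval ω)
  have hφ'Wb : ∀ ω, |φ' (W ω)| ≤ Mf' := fun ω => by
    rw [hφ'J _ (hWval ω)]; exact hMf' _ (hWval ω)
  -- the primitive F of f
  set g : ℝ → ℝ := J.indicator φ with hgdef
  have hgm : Measurable g := hφm.indicator hJmeas
  have hgb : ∀ x, |g x| ≤ Mf := by
    intro x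
    by_cases hx : x ∈ J
    · rw [hgdef]
      simp only [Set.indicator_of_mem hx]
      rw [hφJ x hx]; exact hMf x hx
    · rw [hgdef]
      simp only [Set.indicator_of_notMem hx]
      simpa using hMf0
  have hgJ : Set.EqOn g f J := fun x hx => by
    rw [hgdef]; simp only [Set.indicator_of_mem hx]; exact hφJ x hx
  have hgint : ∀ u v : ℝ, IntervalIntegrable g volume u v := by
    intro u v
    rw [intervalIntegrable_iff]
    refine Measure.integrableOn_of_bounded ?_ hgm.aestronglyMeasurable
      (Filter.Eventually.of_forall fun x => by rw [Real.norm_eq_abs]; exact hgb x)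
    rw [Set.uIoc, Real.volume_Ioc]
    exact ENNReal.ofReal_ne_top
  set F : ℝ → ℝ := fun x => ∫ t in c..x, g t with hFdef
  have hFcont : Continuous F := intervalIntegral.continuous_primitive hgint c
  have hFsub : ∀ u v : ℝ, F v - F u = ∫ t in u..v, g t := by
    intro u v
    have h := intervalIntegral.integral_add_adjacent_intervals (hgint c u) (hgint u v)
    rw [hFdef]
    simp only []
    linarith
  have hFJ : ∀ x ∈ J, ∀ y ∈ J, F y - F x = ∫ t in x..y, f t := by
    intro x hx y hy
    rw [hFsub x y]
    exact intervalIntegral.integral_congr (fun t ht => hgJ (hJc hx hy ht))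
  have hFlip : ∀ u v : ℝ, |F v - F u| ≤ Mf * |v - u| := by
    intro u v
    rw [hFsub u v, ← Real.norm_eq_abs]
    exact intervalIntegral.norm_integral_le_of_norm_le_const
      (fun t _ => by rw [Real.norm_eq_abs]; exact hgb t)
  -- integrability facts
  have hW'2 : MemLp W' 2 μ := by
    have h1 : MemLp id 2 (Measure.map W μ) :=
      (memLp_map_measure_iff aestronglyMeasurable_id hWm.aemeasurable).mpr hW2
    rw [hid] at h1
    exact (memLp_map_measure_iff aestronglyMeasurable_id hW'm.aemeasurable).mp h1
  have hW1 : Integrable W μ := hW2.integrable one_le_two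
  have hW'1 : Integrable W' μ := hW'2.integrable one_le_two
  have hD : Integrable (fun ω => W' ω - W ω) μ := hW'1.sub hW1
  have hD2 : Integrable (fun ω => (W' ω - W ω) ^ 2) μ := by
    have h := (hW'2.sub hW2).integrable_sq
    simpa using h
  have hmW : @Measurable Ω ℝ (MeasurableSpace.comap W inferInstance) _ W :=
    measurable_iff_comap_le.mpr le_rfl
  have hφW_sm : StronglyMeasurable[MeasurableSpace.comap W inferInstance] (fun ω => φ (W ω)) := (hφm.comp hmW).stronglyMeasurable
  have hφ'W_sm : StronglyMeasurable[MeasurableSpace.comap W inferInstance] (fun ω => φ' (W ω)) := (hφ'm.comp hmW).stronglyMeasurable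
  have hφW_aesm : AEStronglyMeasurable (fun ω => φ (W ω)) μ :=
    (hφm.comp hWm).aestronglyMeasurable
  have hφ'W_aesm : AEStronglyMeasurable (fun ω => φ' (W ω)) μ :=
    (hφ'm.comp hWm).aestronglyMeasurable
  have bb : ∃ C, ∀ ω, ‖φ (W ω)‖ ≤ C :=
    ⟨Mf, fun ω => by rw [Real.norm_eq_abs]; exact hφWb ω⟩
  have bb' : ∃ C, ∀ ω, ‖φ' (W ω)‖ ≤ C :=
    ⟨Mf', fun ω => by rw [Real.norm_eq_abs]; exact hφ'Wb ω⟩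
  -- pull-out property
  have pull : ∀ (ψ X : Ω → ℝ), StronglyMeasurable[MeasurableSpace.comap W inferInstance] ψ → AEStronglyMeasurable ψ μ →
      (∃ C, ∀ ω, ‖ψ ω‖ ≤ C) → Integrable X μ →
      ∫ ω, ψ ω * X ω ∂μ = ∫ ω, ψ ω * (μ[X|MeasurableSpace.comap W inferInstance]) ω ∂μ := by
    intro ψ X hsm haesm hbd hX
    have hint : Integrable (ψ * X) μ := hX.bdd_mul haesm (Filter.Eventually.of_forall hbd.choose_spec)
    have h1 := condExp_mul_of_stronglyMeasurable_left hsm hint hX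
    calc ∫ ω, ψ ω * X ω ∂μ = ∫ ω, (ψ * X) ω ∂μ := rfl
      _ = ∫ ω, (μ[ψ * X|MeasurableSpace.comap W inferInstance]) ω ∂μ := (integral_condExp hm).symm
      _ = ∫ ω, (ψ * μ[X|MeasurableSpace.comap W inferInstance]) ω ∂μ := integral_congr_ae h1
      _ = ∫ ω, ψ ω * (μ[X|MeasurableSpace.comap W inferInstance]) ω ∂μ := rfl
  have E1 : ∫ ω, φ (W ω) * (W' ω - W ω) ∂μ
      = ∫ ω, φ (W ω) * (lam * (γ (W ω) + R ω)) ∂μ := by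
    rw [pull _ _ hφW_sm hφW_aesm bb hD]
    refine integral_congr_ae ?_
    filter_upwards [hreg1] with ω hω
    rw [hω]
  have E2 : ∫ ω, φ' (W ω) * (W' ω - W ω) ^ 2 ∂μ
      = ∫ ω, φ' (W ω) * (2 * lam * (etaFun γ p (W ω) + S ω)) ∂μ := by
    rw [pull _ _ hφ'W_sm hφ'W_aesm bb' hD2]
    refine integral_congr_ae ?_
    filter_upwards [hreg2] with ω hω
    rw [hω]
  -- integrability of η(W)
  have h2lam : (2 * lam) ≠ 0 := by positivity
  have hηS : Integrable (fun ω => etaFun γ p (W ω) + S ω) μ := by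
    have h2' : Integrable (fun ω => 2 * lam * (etaFun γ p (W ω) + S ω)) μ :=
      integrable_condExp.congr hreg2
    have h3 := h2'.const_mul (2 * lam)⁻¹
    refine h3.congr (Filter.Eventually.of_forall fun ω => ?_)
    field_simp
  have hηW : Integrable (fun ω => etaFun γ p (W ω)) μ :=
    (hηS.sub hS).congr (Filter.Eventually.of_forall fun ω => by simp)
  -- integrability of F ∘ W, F ∘ W'
  have hFbd : ∀ x : ℝ, ‖F x‖ ≤ |F c| + Mf * |x - c| := by
    intro x
    rw [Real.norm_eq_abs]
    calc |F x| = |F c + (F x - F c)| := by ring_nf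
      _ ≤ |F c| + |F x - F c| := abs_add_le _ _
      _ ≤ |F c| + Mf * |x - c| := by linarith [hFlip c x]
  have hFW : Integrable (fun ω => F (W ω)) μ := by
    refine Integrable.mono' ((integrable_const (|F c|)).add
      (((hW1.sub (integrable_const c)).abs).const_mul Mf))
      ((hFcont.measurable.comp hWm).aestronglyMeasurable)
      (Filter.Eventually.of_forall fun ω => hFbd (W ω))
  have hFW' : Integrable (fun ω => F (W' ω)) μ := by
    refine Integrable.mono' ((integrable_const (|F c|)).add
      (((hW'1.sub (integrable_const c)).abs).const_mul Mf))
      ((hFcont.measurable.comp hW'm).aestronglyMeasurable)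
      (Filter.Eventually.of_forall fun ω => hFbd (W' ω))
  -- various integrable products
  have hφWD : Integrable (fun ω => φ (W ω) * (W' ω - W ω)) μ := hD.bdd_mul hφW_aesm (Filter.Eventually.of_forall bb.choose_spec)
  have hφ'WD2 : Integrable (fun ω => φ' (W ω) * (W' ω - W ω) ^ 2) μ := hD2.bdd_mul hφ'W_aesm (Filter.Eventually.of_forall bb'.choose_spec)
  have hφγ : Integrable (fun ω => φ (W ω) * γ (W ω)) μ := hγW.bdd_mul hφW_aesm (Filter.Eventually.of_forall bb.choose_spec)
  have hφR : Integrable (fun ω => φ (W ω) * R ω) μ := hR.bdd_mul hφW_aesm (Filter.Eventually.of_forall bb.choose_spec)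
  have hφ'η : Integrable (fun ω => φ' (W ω) * etaFun γ p (W ω)) μ := hηW.bdd_mul hφ'W_aesm (Filter.Eventually.of_forall bb'.choose_spec)
  have hφ'S : Integrable (fun ω => φ' (W ω) * S ω) μ := hS.bdd_mul hφ'W_aesm (Filter.Eventually.of_forall bb'.choose_spec)
  -- the remainder
  set rem : Ω → ℝ := fun ω =>
    F (W' ω) - F (W ω) - φ (W ω) * (W' ω - W ω) - φ' (W ω) * (W' ω - W ω) ^ 2 / 2 with hremdef
  have hrem_int : Integrable rem μ := ((hFW'.sub hFW).sub hφWD).sub (hφ'WD2.div_const 2)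
  have hrem_bd : ∀ ω, |rem ω| ≤ (Mf'' : ℝ) / 6 * |W' ω - W ω| ^ 3 := by
    intro ω
    have h := taylor2 hJc hf hf'cont hf'' hFJ (hWval ω) (hW'val ω)
    rw [hremdef]
    simp only []
    rw [hφJ _ (hWval ω), hφ'J _ (hWval ω)]
    exact h
  -- identical distribution
  have hFid : ∫ ω, F (W' ω) ∂μ = ∫ ω, F (W ω) ∂μ := by
    rw [show (∫ ω, F (W' ω) ∂μ) = ∫ x, F x ∂(Measure.map W' μ) from
        (integral_map hW'm.aemeasurable hFcont.aestronglyMeasurable).symm, ← hid,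
      integral_map hWm.aemeasurable hFcont.aestronglyMeasurable]
  -- abbreviations
  set A := ∫ ω, φ (W ω) * γ (W ω) ∂μ with hA
  set B := ∫ ω, φ' (W ω) * etaFun γ p (W ω) ∂μ with hB
  set rR := ∫ ω, φ (W ω) * R ω ∂μ with hrR
  set rS := ∫ ω, φ' (W ω) * S ω ∂μ with hrS
  have hE1' : ∫ ω, φ (W ω) * (W' ω - W ω) ∂μ = lam * (A + rR) := by
    rw [E1, show (fun ω => φ (W ω) * (lam * (γ (W ω) + R ω)))
        = fun ω => lam * (φ (W ω) * γ (W ω) + φ (W ω) * R ω) from funext fun ω => by ring,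
      integral_const_mul, integral_add hφγ hφR]
  have hE2' : ∫ ω, φ' (W ω) * (W' ω - W ω) ^ 2 ∂μ = 2 * lam * (B + rS) := by
    rw [E2, show (fun ω => φ' (W ω) * (2 * lam * (etaFun γ p (W ω) + S ω)))
        = fun ω => (2 * lam) * (φ' (W ω) * etaFun γ p (W ω) + φ' (W ω) * S ω) from
        funext fun ω => by ring,
      integral_const_mul, integral_add hφ'η hφ'S]
  have hsplit : ∫ ω, rem ω ∂μ = ((∫ ω, F (W' ω) ∂μ) - ∫ ω, F (W ω) ∂μ)
      - (∫ ω, φ (W ω) * (W' ω - W ω) ∂μ)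
      - (∫ ω, φ' (W ω) * (W' ω - W ω) ^ 2 ∂μ) / 2 := by
    have i1 : Integrable (fun ω => F (W' ω) - F (W ω)) μ := hFW'.sub hFW
    have i2 : Integrable (fun ω => F (W' ω) - F (W ω) - φ (W ω) * (W' ω - W ω)) μ :=
      i1.sub hφWD
    have i3 : Integrable (fun ω => φ' (W ω) * (W' ω - W ω) ^ 2 / 2) μ := hφ'WD2.div_const 2
    calc ∫ ω, rem ω ∂μ
        = ∫ ω, ((F (W' ω) - F (W ω) - φ (W ω) * (W' ω - W ω))
            - φ' (W ω) * (W' ω - W ω) ^ 2 / 2) ∂μ := rfl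
      _ = (∫ ω, (F (W' ω) - F (W ω) - φ (W ω) * (W' ω - W ω)) ∂μ)
            - ∫ ω, φ' (W ω) * (W' ω - W ω) ^ 2 / 2 ∂μ := integral_sub i2 i3
      _ = ((∫ ω, (F (W' ω) - F (W ω)) ∂μ) - ∫ ω, φ (W ω) * (W' ω - W ω) ∂μ)
            - (∫ ω, φ' (W ω) * (W' ω - W ω) ^ 2 ∂μ) / 2 := by
          rw [integral_sub i1 hφWD, integral_div]
      _ = _ := by rw [integral_sub hFW' hFW]
  have hErem : ∫ ω, rem ω ∂μ = - (lam * (A + rR)) - lam * (B + rS) := by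
    rw [hsplit, hFid, hE1', hE2']
    ring
  -- target
  have hT : ∫ ω, (etaFun γ p (W ω) * f' (W ω) + γ (W ω) * f (W ω)) ∂μ = B + A := by
    rw [show (fun ω => etaFun γ p (W ω) * f' (W ω) + γ (W ω) * f (W ω))
        = fun ω => φ' (W ω) * etaFun γ p (W ω) + φ (W ω) * γ (W ω) from funext fun ω => by
          rw [hφJ _ (hWval ω), hφ'J _ (hWval ω)]; ring,
      integral_add hφ'η hφγ]
  have hintR : (0:ℝ) ≤ ∫ ω, |R ω| ∂μ := integral_nonneg fun _ => abs_nonneg _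
  have hintS : (0:ℝ) ≤ ∫ ω, |S ω| ∂μ := integral_nonneg fun _ => abs_nonneg _
  have hrRb : |rR| ≤ Mf * ∫ ω, |R ω| ∂μ := by
    calc |rR| ≤ ∫ ω, |φ (W ω) * R ω| ∂μ := by
          rw [hrR, ← Real.norm_eq_abs]
          exact (norm_integral_le_integral_norm _).trans_eq (by simp [Real.norm_eq_abs, abs_mul])
      _ ≤ ∫ ω, Mf * |R ω| ∂μ := by
          refine integral_mono hφR.abs (hR.abs.const_mul Mf) fun ω => ?_
          rw [abs_mul]
          exact mul_le_mul_of_nonneg_right (hφWb ω) (abs_nonneg _)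
      _ = Mf * ∫ ω, |R ω| ∂μ := integral_const_mul _ _
  have hrSb : |rS| ≤ Mf' * ∫ ω, |S ω| ∂μ := by
    calc |rS| ≤ ∫ ω, |φ' (W ω) * S ω| ∂μ := by
          rw [hrS, ← Real.norm_eq_abs]
          exact (norm_integral_le_integral_norm _).trans_eq (by simp [Real.norm_eq_abs, abs_mul])
      _ ≤ ∫ ω, Mf' * |S ω| ∂μ := by
          refine integral_mono hφ'S.abs (hS.abs.const_mul Mf') fun ω => ?_
          rw [abs_mul]
          exact mul_le_mul_of_nonneg_right (hφ'Wb ω) (abs_nonneg _)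
      _ = Mf' * ∫ ω, |S ω| ∂μ := integral_const_mul _ _
  have hABkey : lam * |A + B| ≤ |∫ ω, rem ω ∂μ| + lam * (Mf * ∫ ω, |R ω| ∂μ)
      + lam * (Mf' * ∫ ω, |S ω| ∂μ) := by
    have h1 : lam * (A + B) = -(∫ ω, rem ω ∂μ) - lam * rR - lam * rS := by
      rw [hErem]; ring
    have h2 : |lam * (A + B)| ≤ |∫ ω, rem ω ∂μ| + lam * |rR| + lam * |rS| := by
      rw [h1]
      calc |-(∫ ω, rem ω ∂μ) - lam * rR - lam * rS|
          ≤ |-(∫ ω, rem ω ∂μ) - lam * rR| + |lam * rS| := abs_sub _ _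
        _ ≤ |-(∫ ω, rem ω ∂μ)| + |lam * rR| + |lam * rS| := by
            linarith [abs_sub (-(∫ ω, rem ω ∂μ)) (lam * rR)]
        _ = |∫ ω, rem ω ∂μ| + lam * |rR| + lam * |rS| := by
            rw [abs_neg, abs_mul, abs_mul, abs_of_pos hlam]
    rw [abs_mul, abs_of_pos hlam] at h2
    have h3 : lam * |rR| ≤ lam * (Mf * ∫ ω, |R ω| ∂μ) :=
      mul_le_mul_of_nonneg_left hrRb hlam.le
    have h4 : lam * |rS| ≤ lam * (Mf' * ∫ ω, |S ω| ∂μ) :=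
      mul_le_mul_of_nonneg_left hrSb hlam.le
    linarith
  rw [hT]
  by_cases hcube : Integrable (fun ω => |W' ω - W ω| ^ 3) μ
  · -- |D|³ integrable
    have hcubeint : (0:ℝ) ≤ ∫ ω, |W' ω - W ω| ^ 3 ∂μ :=
      integral_nonneg fun ω => by positivity
    have hlint : ∫⁻ ω, ENNReal.ofReal (|W' ω - W ω| ^ 3) ∂μ
        = ENNReal.ofReal (∫ ω, |W' ω - W ω| ^ 3 ∂μ) :=
      (ofReal_integral_eq_lintegral_ofReal hcube
        (Filter.Eventually.of_forall fun ω => by positivity)).symm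
    have hErem_bd : |∫ ω, rem ω ∂μ| ≤ (Mf'' : ℝ) / 6 * ∫ ω, |W' ω - W ω| ^ 3 ∂μ := by
      calc |∫ ω, rem ω ∂μ| ≤ ∫ ω, |rem ω| ∂μ := by
            rw [← Real.norm_eq_abs]
            exact (norm_integral_le_integral_norm _).trans_eq (by simp [Real.norm_eq_abs, abs_mul])
        _ ≤ ∫ ω, (Mf'' : ℝ) / 6 * |W' ω - W ω| ^ 3 ∂μ :=
            integral_mono hrem_int.abs (hcube.const_mul _) hrem_bd
        _ = (Mf'' : ℝ) / 6 * ∫ ω, |W' ω - W ω| ^ 3 ∂μ := integral_const_mul _ _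
    have hreal : |B + A| ≤ (Mf'' : ℝ) / (6 * lam) * (∫ ω, |W' ω - W ω| ^ 3 ∂μ)
        + Mf * (∫ ω, |R ω| ∂μ) + Mf' * ∫ ω, |S ω| ∂μ := by
      have hc1 : (Mf'' : ℝ) / (6 * lam) * (∫ ω, |W' ω - W ω| ^ 3 ∂μ) * lam
          = (Mf'' : ℝ) / 6 * ∫ ω, |W' ω - W ω| ^ 3 ∂μ := by
        field_simp
      have h5 : lam * |B + A| ≤ lam * ((Mf'' : ℝ) / (6 * lam) * (∫ ω, |W' ω - W ω| ^ 3 ∂μ)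
          + Mf * (∫ ω, |R ω| ∂μ) + Mf' * ∫ ω, |S ω| ∂μ) := by
        rw [show B + A = A + B by ring]
        calc lam * |A + B| ≤ |∫ ω, rem ω ∂μ| + lam * (Mf * ∫ ω, |R ω| ∂μ)
            + lam * (Mf' * ∫ ω, |S ω| ∂μ) := hABkey
          _ ≤ (Mf'' : ℝ) / 6 * (∫ ω, |W' ω - W ω| ^ 3 ∂μ) + lam * (Mf * ∫ ω, |R ω| ∂μ)
            + lam * (Mf' * ∫ ω, |S ω| ∂μ) := by linarith
          _ = _ := by rw [← hc1]; ring
      exact le_of_mul_le_mul_left h5 hlam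
    rw [hlint]
    calc ENNReal.ofReal |B + A|
        ≤ ENNReal.ofReal ((Mf'' : ℝ) / (6 * lam) * (∫ ω, |W' ω - W ω| ^ 3 ∂μ)
          + Mf * (∫ ω, |R ω| ∂μ) + Mf' * ∫ ω, |S ω| ∂μ) := ENNReal.ofReal_le_ofReal hreal
      _ = ENNReal.ofReal ((Mf'' : ℝ) / (6 * lam) * ∫ ω, |W' ω - W ω| ^ 3 ∂μ)
          + ENNReal.ofReal (Mf * ∫ ω, |R ω| ∂μ) + ENNReal.ofReal (Mf' * ∫ ω, |S ω| ∂μ) := by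
          rw [ENNReal.ofReal_add (by positivity) (mul_nonneg hMf'0 hintS),
            ENNReal.ofReal_add (by positivity) (mul_nonneg hMf0 hintR)]
      _ = ENNReal.ofReal ((Mf'' : ℝ) / (6 * lam))
            * ENNReal.ofReal (∫ ω, |W' ω - W ω| ^ 3 ∂μ)
          + ENNReal.ofReal (Mf * ∫ ω, |R ω| ∂μ) + ENNReal.ofReal (Mf' * ∫ ω, |S ω| ∂μ) := by
          rw [ENNReal.ofReal_mul (by positivity)]
  · -- |D|³ not integrable
    rcases eq_or_ne Mf'' 0 with h0 | h0
    · -- f' constant: remainder vanishes identically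
      have hrem0 : ∫ ω, rem ω ∂μ = 0 := by
        have hz : rem = fun _ => 0 := funext fun ω => by
          have := hrem_bd ω
          rw [h0] at this
          simp only [NNReal.coe_zero, zero_div, zero_mul] at this
          exact abs_nonpos_iff.mp this
        rw [hz, integral_zero]
      have hreal : |B + A| ≤ Mf * (∫ ω, |R ω| ∂μ) + Mf' * ∫ ω, |S ω| ∂μ := by
        have h5 := hABkey
        rw [hrem0] at h5
        simp only [abs_zero, zero_add] at h5
        have h6 : lam * |B + A| ≤ lam * (Mf * (∫ ω, |R ω| ∂μ) + Mf' * ∫ ω, |S ω| ∂μ) := by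
          rw [show B + A = A + B by ring]
          calc lam * |A + B| ≤ lam * (Mf * ∫ ω, |R ω| ∂μ) + lam * (Mf' * ∫ ω, |S ω| ∂μ) := h5
            _ = _ := by ring
        exact le_of_mul_le_mul_left h6 hlam
      calc ENNReal.ofReal |B + A|
          ≤ ENNReal.ofReal (Mf * (∫ ω, |R ω| ∂μ) + Mf' * ∫ ω, |S ω| ∂μ) :=
            ENNReal.ofReal_le_ofReal hreal
        _ = ENNReal.ofReal (Mf * ∫ ω, |R ω| ∂μ) + ENNReal.ofReal (Mf' * ∫ ω, |S ω| ∂μ) :=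
            ENNReal.ofReal_add (mul_nonneg hMf0 hintR) (mul_nonneg hMf'0 hintS)
        _ ≤ _ := by
            rw [add_assoc]
            exact le_add_self
    · -- Mf'' > 0 and cube not integrable: RHS is infinite
      have htop : ∫⁻ ω, ENNReal.ofReal (|W' ω - W ω| ^ 3) ∂μ = ⊤ := by
        by_contra hne
        apply hcube
        refine ⟨((hW'm.sub hWm).abs.pow_const 3).aestronglyMeasurable, ?_⟩
        rw [hasFiniteIntegral_iff_ofReal (Filter.Eventually.of_forall fun ω => by positivity)]
        exact lt_top_iff_ne_top.mpr hne
      have h1 : ENNReal.ofReal ((Mf'' : ℝ) / (6 * lam)) ≠ 0 := by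
        rw [ne_eq, ENNReal.ofReal_eq_zero, not_le]
        have : 0 < (Mf'' : ℝ) := by
          exact_mod_cast pos_iff_ne_zero.mpr h0
        positivity
      rw [htop, ENNReal.mul_top h1]
      exact le_top.trans (le_self_add.trans le_self_add)


end
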